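/- Fix R2 ≥ 0, pmfs Q1 on 𝒳1 and Q2 on 𝒳2, and a channel q1 with q1(y|x1,x2) > 0 for all arguments. Then sup_{(ρ,λ)∈[0,1]²} E_{R,1}(0, R2, Q1, Q2, ρ, λ) ≥ min{ inf_{P∈𝒫(Q1,Q2)} [ D(P) + I(X̂1;X̂2) + I(X̂1;Ŷ1) + |I(X̂2;(X̂1,Ŷ1)) − R2|⁺ ] , inf_{P∈𝒫(Q1,Q2)} [ D(P) + I(X̂1;X̂2) + I(X̂1;(X̂2,Ŷ1)) ] }, where all information quantities inside the infima are computed under P. -/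

import Mathlib

open Finset

section InfoDefs

variable {Ω : Type*} [Fintype Ω]

/-- A probability mass function on a finite type. -/
def IsPMF {α : Type*} [Fintype α] (p : α → ℝ) : Prop :=
  (∀ a, 0 ≤ p a) ∧ ∑ a, p a = 1

/-- Pushforward of `P` along `f` (the pmf of the random variable `f`). -/
noncomputable def pushf {α : Type*} [Fintype α] [DecidableEq α]
    (P : Ω → ℝ) (f : Ω → α) (a : α) : ℝ :=
  ∑ ω, if f ω = a then P ω else 0

/-- Entropy of the random variable `f` under `P`. -/
noncomputable def entH {α : Type*} [Fintype α] [DecidableEq α]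
    (P : Ω → ℝ) (f : Ω → α) : ℝ :=
  -∑ a, pushf P f a * Real.log (pushf P f a)

/-- Conditional entropy `H(g | f)` under `P`. -/
noncomputable def condEnt {α β : Type*} [Fintype α] [DecidableEq α] [Fintype β] [DecidableEq β]
    (P : Ω → ℝ) (f : Ω → α) (g : Ω → β) : ℝ :=
  -∑ a, ∑ b, pushf P (fun ω => (f ω, g ω)) (a, b) *
      Real.log (pushf P (fun ω => (f ω, g ω)) (a, b) / pushf P f a)

/-- Mutual information `I(f;g)` under `P`. -/
noncomputable def mutI {α β : Type*} [Fintype α] [DecidableEq α] [Fintype β] [DecidableEq β]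
    (P : Ω → ℝ) (f : Ω → α) (g : Ω → β) : ℝ :=
  ∑ a, ∑ b, pushf P (fun ω => (f ω, g ω)) (a, b) *
      Real.log (pushf P (fun ω => (f ω, g ω)) (a, b) / (pushf P f a * pushf P g b))

/-- Conditional mutual information `I(f;g|h)` under `P`. -/
noncomputable def condMutI {α β γ : Type*} [Fintype α] [DecidableEq α] [Fintype β]
    [DecidableEq β] [Fintype γ] [DecidableEq γ]
    (P : Ω → ℝ) (f : Ω → α) (g : Ω → β) (h : Ω → γ) : ℝ :=
  ∑ a, ∑ b, ∑ c, pushf P (fun ω => (f ω, g ω, h ω)) (a, b, c) *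
      Real.log (pushf P (fun ω => (f ω, g ω, h ω)) (a, b, c) * pushf P h c /
        (pushf P (fun ω => (f ω, h ω)) (a, c) * pushf P (fun ω => (g ω, h ω)) (b, c)))

end InfoDefs
section IFC

variable {X1 X2 Y1 : Type*} [Fintype X1] [DecidableEq X1] [Fintype X2] [DecidableEq X2]
  [Fintype Y1] [DecidableEq Y1]

/-- The function `g(ρ,λ,P,P')`. -/
noncomputable def gFun (q1 : X1 → X2 → Y1 → ℝ) (ρ lam : ℝ)
    (P P' : X1 × X2 × Y1 → ℝ) : ℝ :=
  -(1 - ρ * lam) * (∑ z, P z * Real.log (q1 z.1 z.2.1 z.2.2))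
    - ρ * lam * (∑ z, P' z * Real.log (q1 z.1 z.2.1 z.2.2))

/-- The function `f1(ρ,λ,P,P')`. -/
noncomputable def f1Fun (q1 : X1 → X2 → Y1 → ℝ) (R2 ρ lam : ℝ)
    (P P' : X1 × X2 × Y1 → ℝ) : ℝ :=
  gFun q1 ρ lam P P'
    - condEnt P (fun z => z.1) (fun z => z.2.2)
    + ρ * mutI P' (fun z => z.1) (fun z => z.2.2)
    + max (mutI P (fun z => z.2.1) (fun z => (z.1, z.2.2)) - R2)
        ((1 - ρ * lam) * (mutI P (fun z => z.2.1) (fun z => (z.1, z.2.2)) - R2))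
    + max (max ((1 - ρ) * mutI P' (fun z => z.2.1) (fun z => z.2.2)
            + ρ * mutI P' (fun z => z.2.1) (fun z => (z.1, z.2.2)) - R2)
          (ρ * (mutI P' (fun z => z.2.1) (fun z => (z.1, z.2.2)) - R2)))
        (ρ * lam * (mutI P' (fun z => z.2.1) (fun z => (z.1, z.2.2)) - R2))

/-- The function `f2(ρ,λ,P,P')`. -/
noncomputable def f2Fun (q1 : X1 → X2 → Y1 → ℝ) (R2 ρ lam : ℝ)
    (P P' : X1 × X2 × Y1 → ℝ) : ℝ :=
  gFun q1 ρ lam P P'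
    - condEnt P (fun z => z.1) (fun z => z.2.2)
    + ρ * mutI P' (fun z => z.1) (fun z => (z.2.1, z.2.2))
    + mutI P (fun z => z.2.1) (fun z => (z.1, z.2.2)) - R2

/-- The constraint set `S1(Q1,Q2)`. -/
def S1set (Y1 : Type*) [Fintype Y1] [DecidableEq Y1] (Q1 : X1 → ℝ) (Q2 : X2 → ℝ) :
    Set ((X1 × X2 × Y1 → ℝ) × (X1 × X2 × Y1 → ℝ)) :=
  {PP | IsPMF PP.1 ∧ IsPMF PP.2 ∧
    pushf PP.1 (fun z => z.2.2) = pushf PP.2 (fun z => z.2.2) ∧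
    pushf PP.1 (fun z => z.1) = Q1 ∧ pushf PP.2 (fun z => z.1) = Q1 ∧
    pushf PP.1 (fun z => z.2.1) = Q2 ∧ pushf PP.2 (fun z => z.2.1) = Q2}

/-- The constraint set `S2(Q1,Q2,R2)`. -/
def S2set (Y1 : Type*) [Fintype Y1] [DecidableEq Y1] (Q1 : X1 → ℝ) (Q2 : X2 → ℝ) (R2 : ℝ) :
    Set ((X1 × X2 × Y1 → ℝ) × (X1 × X2 × Y1 → ℝ)) :=
  {PP | IsPMF PP.1 ∧ IsPMF PP.2 ∧
    pushf PP.1 (fun z => z.1) = Q1 ∧ pushf PP.2 (fun z => z.1) = Q1 ∧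
    pushf PP.1 (fun z => z.2.1) = Q2 ∧ pushf PP.2 (fun z => z.2.1) = Q2 ∧
    R2 ≤ mutI PP.1 (fun z => z.2.1) (fun z => z.2.2) ∧
    pushf PP.1 (fun z => (z.2.1, z.2.2)) = pushf PP.2 (fun z => (z.2.1, z.2.2))}

/-- The error exponent `E_{R,1}(R1,R2,Q1,Q2,ρ,λ)` (with `+∞` for infima over empty sets). -/
noncomputable def ER1 (q1 : X1 → X2 → Y1 → ℝ) (R1 R2 : ℝ) (Q1 : X1 → ℝ) (Q2 : X2 → ℝ)
    (ρ lam : ℝ) : EReal :=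
  ((R2 - ρ * R1 : ℝ) : EReal) +
    min (⨅ PP : S1set Y1 Q1 Q2, ((f1Fun q1 R2 ρ lam PP.1.1 PP.1.2 : ℝ) : EReal))
        (⨅ PP : S2set Y1 Q1 Q2 R2, ((f2Fun q1 R2 ρ lam PP.1.1 PP.1.2 : ℝ) : EReal))

end IFC

section Benchmark

variable {X1 X2 Y1 : Type*} [Fintype X1] [DecidableEq X1] [Fintype X2] [DecidableEq X2]
  [Fintype Y1] [DecidableEq Y1]

/-- The conditional relative entropy `D(P_{Ŷ1|X̂1,X̂2} ‖ q1 | P_{X̂1,X̂2})`. -/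
noncomputable def Dq (q1 : X1 → X2 → Y1 → ℝ) (P : X1 × X2 × Y1 → ℝ) : ℝ :=
  ∑ z, P z * Real.log (P z /
    (pushf P (fun w => (w.1, w.2.1)) (z.1, z.2.1) * q1 z.1 z.2.1 z.2.2))

/-- The set `𝒫(Q1,Q2)` of joint pmfs on `X1 × X2 × Y1` with the prescribed marginals. -/
def Pset (Y1 : Type*) [Fintype Y1] [DecidableEq Y1] {X1 X2 : Type*}
    [Fintype X1] [DecidableEq X1] [Fintype X2] [DecidableEq X2]
    (Q1 : X1 → ℝ) (Q2 : X2 → ℝ) : Set (X1 × X2 × Y1 → ℝ) :=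
  {P | IsPMF P ∧ pushf P (fun z => z.1) = Q1 ∧ pushf P (fun z => z.2.1) = Q2}

/-- The benchmark exponent `E_{1,2}(R1,R2)`. -/
noncomputable def E12 (q1 : X1 → X2 → Y1 → ℝ) (Q1 : X1 → ℝ) (Q2 : X2 → ℝ)
    (R1 R2 : ℝ) : EReal :=
  ⨅ P : Pset Y1 Q1 Q2,
    ((Dq q1 P.1 + mutI P.1 (fun z => z.1) (fun z => z.2.1)
      + max (mutI P.1 (fun z => z.1) (fun z => z.2.2)
          + mutI P.1 (fun z => z.2.1) (fun z => (z.1, z.2.2)) - R1 - R2) 0 : ℝ) : EReal)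

/-- The benchmark exponent `E_{1|2}(R1)`. -/
noncomputable def E1g2 (q1 : X1 → X2 → Y1 → ℝ) (Q1 : X1 → ℝ) (Q2 : X2 → ℝ)
    (R1 : ℝ) : EReal :=
  ⨅ P : Pset Y1 Q1 Q2,
    ((Dq q1 P.1 + mutI P.1 (fun z => z.1) (fun z => z.2.1)
      + max (mutI P.1 (fun z => z.1) (fun z => (z.2.1, z.2.2)) - R1) 0 : ℝ) : EReal)

/-- The benchmark exponent `E_1(R1)`. -/
noncomputable def E1only (q1 : X1 → X2 → Y1 → ℝ) (Q1 : X1 → ℝ) (Q2 : X2 → ℝ)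
    (R1 : ℝ) : EReal :=
  ⨅ P : Pset Y1 Q1 Q2,
    ((Dq q1 P.1 + mutI P.1 (fun z => z.1) (fun z => z.2.1)
      + max (mutI P.1 (fun z => z.1) (fun z => z.2.2) - R1) 0 : ℝ) : EReal)

/-- The benchmark exponent `E_{B,1}(R1,R2)`. -/
noncomputable def EB1 (q1 : X1 → X2 → Y1 → ℝ) (Q1 : X1 → ℝ) (Q2 : X2 → ℝ)
    (R1 R2 : ℝ) : EReal :=
  max (E1only q1 Q1 Q2 R1) (min (E12 q1 Q1 Q2 R1 R2) (E1g2 q1 Q1 Q2 R1))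

end Benchmark


section AuxStmt16
set_option linter.unusedSectionVars false

variable {Ω : Type*} [Fintype Ω]

lemma sum_pushf_mul {α : Type*} [Fintype α] [DecidableEq α] (P : Ω → ℝ) (f : Ω → α)
    (φ : α → ℝ) : ∑ a, pushf P f a * φ a = ∑ ω, P ω * φ (f ω) := by
  unfold pushf
  simp only [Finset.sum_mul, ite_mul, zero_mul]
  rw [Finset.sum_comm]
  refine Finset.sum_congr rfl fun ω _ => ?_
  rw [Finset.sum_ite_eq Finset.univ (f ω) (fun a => P ω * φ a)]
  simp

/-- Negative entropy functional. -/
noncomputable def Sent {α : Type*} [Fintype α] [DecidableEq α] (P : Ω → ℝ) (f : Ω → α) : ℝ :=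
  ∑ a, pushf P f a * Real.log (pushf P f a)

lemma Sent_eq_sum {α : Type*} [Fintype α] [DecidableEq α] (P : Ω → ℝ) (f : Ω → α) :
    Sent P f = ∑ ω, P ω * Real.log (pushf P f (f ω)) :=
  sum_pushf_mul P f _

lemma le_pushf {α : Type*} [Fintype α] [DecidableEq α] {P : Ω → ℝ}
    (hP : ∀ ω, 0 ≤ P ω) (f : Ω → α) (ω0 : Ω) : P ω0 ≤ pushf P f (f ω0) := by
  have h := Finset.single_le_sum (f := fun ω => if f ω = f ω0 then P ω else 0)
      (fun i _ => by split_ifs; exacts [hP i, le_rfl]) (Finset.mem_univ ω0)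
  simpa [pushf] using h

lemma pushf_pos {α : Type*} [Fintype α] [DecidableEq α] {P : Ω → ℝ}
    (hP : ∀ ω, 0 ≤ P ω) {ω0 : Ω} (h : 0 < P ω0) (f : Ω → α) : 0 < pushf P f (f ω0) :=
  lt_of_lt_of_le h (le_pushf hP f ω0)

lemma sum_pushf_mul2 {α β : Type*} [Fintype α] [DecidableEq α] [Fintype β] [DecidableEq β]
    (P : Ω → ℝ) (h : Ω → α × β) (φ : α → β → ℝ) :
    ∑ a, ∑ b, pushf P h (a, b) * φ a b = ∑ ω, P ω * φ (h ω).1 (h ω).2 := by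
  have key := sum_pushf_mul P h (fun p => φ p.1 p.2)
  rw [← key, Fintype.sum_prod_type]

lemma mutI_eq {α β : Type*} [Fintype α] [DecidableEq α] [Fintype β] [DecidableEq β]
    (P : Ω → ℝ) (hP : ∀ ω, 0 ≤ P ω) (f : Ω → α) (g : Ω → β) :
    mutI P f g = Sent P (fun ω => (f ω, g ω)) - Sent P f - Sent P g := by
  have h1 : mutI P f g = ∑ ω, P ω *
      Real.log (pushf P (fun ω => (f ω, g ω)) (f ω, g ω) /
        (pushf P f (f ω) * pushf P g (g ω))) := by
    unfold mutI
    exact sum_pushf_mul2 P (fun ω => (f ω, g ω))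
      (fun a b => Real.log (pushf P (fun ω => (f ω, g ω)) (a, b) /
        (pushf P f a * pushf P g b)))
  rw [h1]
  have key : ∀ ω ∈ (Finset.univ : Finset Ω), P ω *
      Real.log (pushf P (fun ω => (f ω, g ω)) (f ω, g ω) /
        (pushf P f (f ω) * pushf P g (g ω)))
      = P ω * Real.log (pushf P (fun ω => (f ω, g ω)) (f ω, g ω))
        - P ω * Real.log (pushf P f (f ω)) - P ω * Real.log (pushf P g (g ω)) := by
    intro ω _
    rcases eq_or_lt_of_le (hP ω) with h | h
    · rw [← h]; ring
    · have hpp : (0:ℝ) < pushf P (fun ω' => (f ω', g ω')) (f ω, g ω) := pushf_pos hP h _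
      have hf : (0:ℝ) < pushf P f (f ω) := pushf_pos hP h f
      have hg : (0:ℝ) < pushf P g (g ω) := pushf_pos hP h g
      rw [Real.log_div hpp.ne' (mul_pos hf hg).ne', Real.log_mul hf.ne' hg.ne']
      ring
  rw [Finset.sum_congr rfl key, Finset.sum_sub_distrib, Finset.sum_sub_distrib,
    Sent_eq_sum P (fun ω => (f ω, g ω)), Sent_eq_sum P f, Sent_eq_sum P g]

lemma condEnt_eq {α β : Type*} [Fintype α] [DecidableEq α] [Fintype β] [DecidableEq β]
    (P : Ω → ℝ) (hP : ∀ ω, 0 ≤ P ω) (f : Ω → α) (g : Ω → β) :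
    condEnt P f g = Sent P f - Sent P (fun ω => (f ω, g ω)) := by
  have h1 : condEnt P f g = -∑ ω, P ω *
      Real.log (pushf P (fun ω => (f ω, g ω)) (f ω, g ω) / pushf P f (f ω)) := by
    unfold condEnt
    rw [sum_pushf_mul2 P (fun ω => (f ω, g ω))
      (fun a b => Real.log (pushf P (fun ω => (f ω, g ω)) (a, b) / pushf P f a))]
  rw [h1]
  have key : ∀ ω ∈ (Finset.univ : Finset Ω), P ω *
      Real.log (pushf P (fun ω => (f ω, g ω)) (f ω, g ω) / pushf P f (f ω))
      = P ω * Real.log (pushf P (fun ω => (f ω, g ω)) (f ω, g ω))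
        - P ω * Real.log (pushf P f (f ω)) := by
    intro ω _
    rcases eq_or_lt_of_le (hP ω) with h | h
    · rw [← h]; ring
    · have hpp : (0:ℝ) < pushf P (fun ω' => (f ω', g ω')) (f ω, g ω) := pushf_pos hP h _
      have hf : (0:ℝ) < pushf P f (f ω) := pushf_pos hP h f
      rw [Real.log_div hpp.ne' hf.ne']
      ring
  rw [Finset.sum_congr rfl key, Finset.sum_sub_distrib,
    Sent_eq_sum P (fun ω => (f ω, g ω)), Sent_eq_sum P f]
  ring

lemma pushf_inj_apply {α : Type*} [Fintype α] [DecidableEq α] (P : Ω → ℝ) {e : Ω → α}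
    (he : Function.Injective e) (ω : Ω) : pushf P e (e ω) = P ω := by
  unfold pushf
  rw [Finset.sum_eq_single ω (fun b _ hb => if_neg fun hc => hb (he hc))
    (fun h => absurd (Finset.mem_univ ω) h), if_pos rfl]

lemma Sent_inj {α : Type*} [Fintype α] [DecidableEq α] (P : Ω → ℝ) (e : Ω → α)
    (he : Function.Injective e) : Sent P e = ∑ ω, P ω * Real.log (P ω) := by
  rw [Sent_eq_sum]
  exact Finset.sum_congr rfl fun ω _ => by rw [pushf_inj_apply P he ω]

lemma max_half (x : ℝ) : max x ((1/2) * x) = (1/2) * x + (1/2) * max x 0 := by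
  rcases le_total x 0 with h | h
  · rw [max_eq_right (by linarith), max_eq_right h]; ring
  · rw [max_eq_left (by linarith), max_eq_left h]; ring

lemma half_min {a b c : ℝ} {L : EReal} (h : c = (1/2)*a + (1/2)*b)
    (h1 : L ≤ (a : EReal)) (h2 : L ≤ (b : EReal)) : L ≤ (c : EReal) := by
  rcases le_total a b with hc | hc
  · exact h1.trans (EReal.coe_le_coe_iff.mpr (by rw [h]; linarith))
  · exact h2.trans (EReal.coe_le_coe_iff.mpr (by rw [h]; linarith))

lemma ereal_coe_add_iInf {ι : Sort*} (r : ℝ) (g : ι → EReal) :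
    (r : EReal) + ⨅ i, g i = ⨅ i, ((r : EReal) + g i) := by
  apply le_antisymm
  · exact le_iInf fun i => add_le_add le_rfl (iInf_le g i)
  · have h2 : ∀ i, ((-r : ℝ) : EReal) + ⨅ j, ((r : EReal) + g j) ≤ g i := by
      intro i
      have h1 : (⨅ j, ((r : EReal) + g j)) ≤ (r : EReal) + g i := iInf_le _ i
      calc ((-r : ℝ) : EReal) + ⨅ j, ((r : EReal) + g j)
          ≤ ((-r : ℝ) : EReal) + ((r : EReal) + g i) := add_le_add le_rfl h1
        _ = g i := by rw [← add_assoc, ← EReal.coe_add, neg_add_cancel, EReal.coe_zero, zero_add]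
    have h3 := le_iInf h2
    calc (⨅ j, ((r : EReal) + g j))
        = (r : EReal) + (((-r : ℝ) : EReal) + ⨅ j, ((r : EReal) + g j)) := by
          rw [← add_assoc, ← EReal.coe_add, add_neg_cancel, EReal.coe_zero, zero_add]
      _ ≤ (r : EReal) + ⨅ i, g i := add_le_add le_rfl h3

end AuxStmt16

section AuxStmt16b
set_option linter.unusedSectionVars false

variable {X1 X2 Y1 : Type*} [Fintype X1] [DecidableEq X1] [Fintype X2] [DecidableEq X2]
  [Fintype Y1] [DecidableEq Y1]

lemma injA16 : Function.Injective (fun z : X1 × X2 × Y1 => (z.2.1, z.1, z.2.2)) := by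
  rintro ⟨a1, a2, a3⟩ ⟨b1, b2, b3⟩ h
  simp only [Prod.mk.injEq] at h ⊢
  tauto

lemma injB16 : Function.Injective (fun z : X1 × X2 × Y1 => (z.1, z.2.1, z.2.2)) := by
  rintro ⟨a1, a2, a3⟩ ⟨b1, b2, b3⟩ h
  simp only [Prod.mk.injEq] at h ⊢
  tauto

lemma Dq_eq (q1 : X1 → X2 → Y1 → ℝ) (hq : ∀ x1 x2 y, 0 < q1 x1 x2 y)
    (P : X1 × X2 × Y1 → ℝ) (hP : ∀ z, 0 ≤ P z) :
    Dq q1 P = (∑ z, P z * Real.log (P z)) - Sent P (fun z => (z.1, z.2.1))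
      - ∑ z, P z * Real.log (q1 z.1 z.2.1 z.2.2) := by
  unfold Dq
  have hs : Sent P (fun z : X1 × X2 × Y1 => (z.1, z.2.1))
      = ∑ z : X1 × X2 × Y1, P z * Real.log (pushf P (fun w => (w.1, w.2.1)) (z.1, z.2.1)) :=
    Sent_eq_sum P _
  rw [hs, ← Finset.sum_sub_distrib, ← Finset.sum_sub_distrib]
  refine Finset.sum_congr rfl fun z _ => ?_
  rcases eq_or_lt_of_le (hP z) with h | h
  · rw [← h]; ring
  · have h12 : (0:ℝ) < pushf P (fun w => (w.1, w.2.1)) (z.1, z.2.1) := pushf_pos hP h _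
    have hq' := hq z.1 z.2.1 z.2.2
    rw [Real.log_div h.ne' (mul_pos h12 hq').ne', Real.log_mul h12.ne' hq'.ne']
    ring

lemma key1 (q1 : X1 → X2 → Y1 → ℝ) (hq : ∀ x1 x2 y, 0 < q1 x1 x2 y) (R2 : ℝ)
    (P P' : X1 × X2 × Y1 → ℝ) (hP : IsPMF P) (hP' : IsPMF P')
    (h3 : pushf P (fun z => z.2.2) = pushf P' (fun z => z.2.2)) :
    R2 + f1Fun q1 R2 1 (1/2) P P' =
      (1/2) * (Dq q1 P + mutI P (fun z => z.1) (fun z => z.2.1)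
          + mutI P (fun z => z.1) (fun z => z.2.2)
          + max (mutI P (fun z => z.2.1) (fun z => (z.1, z.2.2)) - R2) 0)
      + (1/2) * (Dq q1 P' + mutI P' (fun z => z.1) (fun z => z.2.1)
          + mutI P' (fun z => z.1) (fun z => z.2.2)
          + max (mutI P' (fun z => z.2.1) (fun z => (z.1, z.2.2)) - R2) 0) := by
  have hp := hP.1
  have hp' := hP'.1
  unfold f1Fun gFun
  have m1 : max (mutI P (fun z => z.2.1) (fun z => (z.1, z.2.2)) - R2)
      ((1 - 1 * (1/2)) * (mutI P (fun z => z.2.1) (fun z => (z.1, z.2.2)) - R2))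
      = (1/2) * (mutI P (fun z => z.2.1) (fun z => (z.1, z.2.2)) - R2)
        + (1/2) * max (mutI P (fun z => z.2.1) (fun z => (z.1, z.2.2)) - R2) 0 := by
    rw [show (1:ℝ) - 1 * (1/2) = 1/2 by norm_num]
    exact max_half _
  have m2 : max (max ((1 - 1) * mutI P' (fun z => z.2.1) (fun z => z.2.2)
        + 1 * mutI P' (fun z => z.2.1) (fun z => (z.1, z.2.2)) - R2)
        (1 * (mutI P' (fun z => z.2.1) (fun z => (z.1, z.2.2)) - R2)))
      ((1 * (1/2)) * (mutI P' (fun z => z.2.1) (fun z => (z.1, z.2.2)) - R2))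
      = (1/2) * (mutI P' (fun z => z.2.1) (fun z => (z.1, z.2.2)) - R2)
        + (1/2) * max (mutI P' (fun z => z.2.1) (fun z => (z.1, z.2.2)) - R2) 0 := by
    rw [show (1 - (1:ℝ)) * mutI P' (fun z => z.2.1) (fun z => z.2.2)
        + 1 * mutI P' (fun z => z.2.1) (fun z => (z.1, z.2.2)) - R2
        = mutI P' (fun z => z.2.1) (fun z => (z.1, z.2.2)) - R2 by ring,
      one_mul, max_self, show (1:ℝ) * (1/2) = 1/2 by norm_num]
    exact max_half _
  rw [m1, m2]
  simp only [mutI_eq P hp, mutI_eq P' hp', condEnt_eq P hp,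
    Dq_eq q1 hq P hp, Dq_eq q1 hq P' hp']
  have sA : Sent P (fun ω : X1 × X2 × Y1 => (ω.2.1, ω.1, ω.2.2))
      = ∑ z, P z * Real.log (P z) := Sent_inj P _ injA16
  have sA' : Sent P' (fun ω : X1 × X2 × Y1 => (ω.2.1, ω.1, ω.2.2))
      = ∑ z, P' z * Real.log (P' z) := Sent_inj P' _ injA16
  have s3 : Sent P (fun z : X1 × X2 × Y1 => z.2.2) = Sent P' (fun z => z.2.2) := by
    unfold Sent
    rw [h3]
  rw [sA, sA', s3]
  ring

lemma key2 (q1 : X1 → X2 → Y1 → ℝ) (hq : ∀ x1 x2 y, 0 < q1 x1 x2 y) (R2 : ℝ)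
    (P P' : X1 × X2 × Y1 → ℝ) (hP : IsPMF P) (hP' : IsPMF P')
    (h23 : pushf P (fun z => (z.2.1, z.2.2)) = pushf P' (fun z => (z.2.1, z.2.2)))
    (h2 : pushf P (fun z => z.2.1) = pushf P' (fun z => z.2.1)) :
    R2 + f2Fun q1 R2 1 (1/2) P P' =
      (1/2) * (Dq q1 P + mutI P (fun z => z.1) (fun z => z.2.1)
          + mutI P (fun z => z.1) (fun z => (z.2.1, z.2.2)))
      + (1/2) * (Dq q1 P' + mutI P' (fun z => z.1) (fun z => z.2.1)
          + mutI P' (fun z => z.1) (fun z => (z.2.1, z.2.2))) := by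
  have hp := hP.1
  have hp' := hP'.1
  unfold f2Fun gFun
  simp only [mutI_eq P hp, mutI_eq P' hp', condEnt_eq P hp,
    Dq_eq q1 hq P hp, Dq_eq q1 hq P' hp']
  have sA : Sent P (fun ω : X1 × X2 × Y1 => (ω.2.1, ω.1, ω.2.2))
      = ∑ z, P z * Real.log (P z) := Sent_inj P _ injA16
  have sB : Sent P (fun ω : X1 × X2 × Y1 => (ω.1, ω.2.1, ω.2.2))
      = ∑ z, P z * Real.log (P z) := Sent_inj P _ injB16
  have sB' : Sent P' (fun ω : X1 × X2 × Y1 => (ω.1, ω.2.1, ω.2.2))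
      = ∑ z, P' z * Real.log (P' z) := Sent_inj P' _ injB16
  have s23 : Sent P (fun z : X1 × X2 × Y1 => (z.2.1, z.2.2))
      = Sent P' (fun z => (z.2.1, z.2.2)) := by
    unfold Sent
    rw [h23]
  have s2 : Sent P (fun z : X1 × X2 × Y1 => z.2.1) = Sent P' (fun z => z.2.1) := by
    unfold Sent
    rw [h2]
  rw [sA, sB, sB', s23, s2]
  ring

end AuxStmt16b

/-- the optimized new exponent at `R1 = 0` dominates the simplified
two-term minimum. -/
theorem stmt16 {X1 X2 Y1 : Type*} [Fintype X1] [DecidableEq X1] [Fintype X2] [DecidableEq X2]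
    [Fintype Y1] [DecidableEq Y1]
    (q1 : X1 → X2 → Y1 → ℝ) (hq_pos : ∀ x1 x2 y, 0 < q1 x1 x2 y)
    (hq_sum : ∀ x1 x2, ∑ y, q1 x1 x2 y = 1)
    (R2 : ℝ) (hR2 : 0 ≤ R2) (Q1 : X1 → ℝ) (Q2 : X2 → ℝ) (hQ1 : IsPMF Q1) (hQ2 : IsPMF Q2) :
    min
      (⨅ P : Pset Y1 Q1 Q2,
        ((Dq q1 P.1 + mutI P.1 (fun z => z.1) (fun z => z.2.1)
          + mutI P.1 (fun z => z.1) (fun z => z.2.2)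
          + max (mutI P.1 (fun z => z.2.1) (fun z => (z.1, z.2.2)) - R2) 0 : ℝ) : EReal))
      (⨅ P : Pset Y1 Q1 Q2,
        ((Dq q1 P.1 + mutI P.1 (fun z => z.1) (fun z => z.2.1)
          + mutI P.1 (fun z => z.1) (fun z => (z.2.1, z.2.2)) : ℝ) : EReal))
    ≤ ⨆ ρ : Set.Icc (0 : ℝ) 1, ⨆ lam : Set.Icc (0 : ℝ) 1,
        ER1 q1 0 R2 Q1 Q2 (ρ : ℝ) (lam : ℝ) := by
  have hstep : ER1 q1 0 R2 Q1 Q2 ((1:ℝ)) ((1/2 : ℝ))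
      ≤ ⨆ ρ : Set.Icc (0 : ℝ) 1, ⨆ lam : Set.Icc (0 : ℝ) 1,
          ER1 q1 0 R2 Q1 Q2 (ρ : ℝ) (lam : ℝ) := by
    have h1 : ER1 q1 0 R2 Q1 Q2 ((1:ℝ)) ((1/2:ℝ))
        ≤ ⨆ lam : Set.Icc (0 : ℝ) 1, ER1 q1 0 R2 Q1 Q2 ((1:ℝ)) (lam : ℝ) :=
      le_iSup (fun lam : Set.Icc (0 : ℝ) 1 => ER1 q1 0 R2 Q1 Q2 ((1:ℝ)) (lam : ℝ))
        ⟨1/2, by norm_num⟩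
    refine h1.trans ?_
    exact le_iSup (fun ρ : Set.Icc (0 : ℝ) 1 =>
      ⨆ lam : Set.Icc (0 : ℝ) 1, ER1 q1 0 R2 Q1 Q2 (ρ : ℝ) (lam : ℝ)) ⟨1, by norm_num⟩
  refine le_trans ?_ hstep
  unfold ER1
  rw [show (R2 - 1 * 0 : ℝ) = R2 by ring, ← min_add_add_left]
  refine le_min ?_ ?_
  · rw [ereal_coe_add_iInf]
    refine le_iInf ?_
    rintro ⟨⟨Pa, Pb⟩, hPP⟩
    simp only [S1set, Set.mem_setOf_eq] at hPP
    obtain ⟨hPa, hPb, h3, hm1, hm1', hm2, hm2'⟩ := hPP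
    have hmemA : Pa ∈ Pset Y1 Q1 Q2 := by
      simp only [Pset, Set.mem_setOf_eq]
      exact ⟨hPa, hm1, hm2⟩
    have hmemB : Pb ∈ Pset Y1 Q1 Q2 := by
      simp only [Pset, Set.mem_setOf_eq]
      exact ⟨hPb, hm1', hm2'⟩
    have hA1 : (⨅ P : Pset Y1 Q1 Q2,
        ((Dq q1 P.1 + mutI P.1 (fun z => z.1) (fun z => z.2.1)
          + mutI P.1 (fun z => z.1) (fun z => z.2.2)
          + max (mutI P.1 (fun z => z.2.1) (fun z => (z.1, z.2.2)) - R2) 0 : ℝ) : EReal))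
        ≤ ((Dq q1 Pa + mutI Pa (fun z => z.1) (fun z => z.2.1)
          + mutI Pa (fun z => z.1) (fun z => z.2.2)
          + max (mutI Pa (fun z => z.2.1) (fun z => (z.1, z.2.2)) - R2) 0 : ℝ) : EReal) :=
      iInf_le _ (⟨Pa, hmemA⟩ : Pset Y1 Q1 Q2)
    have hA2 : (⨅ P : Pset Y1 Q1 Q2,
        ((Dq q1 P.1 + mutI P.1 (fun z => z.1) (fun z => z.2.1)
          + mutI P.1 (fun z => z.1) (fun z => z.2.2)
          + max (mutI P.1 (fun z => z.2.1) (fun z => (z.1, z.2.2)) - R2) 0 : ℝ) : EReal))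
        ≤ ((Dq q1 Pb + mutI Pb (fun z => z.1) (fun z => z.2.1)
          + mutI Pb (fun z => z.1) (fun z => z.2.2)
          + max (mutI Pb (fun z => z.2.1) (fun z => (z.1, z.2.2)) - R2) 0 : ℝ) : EReal) :=
      iInf_le _ (⟨Pb, hmemB⟩ : Pset Y1 Q1 Q2)
    have hkey := key1 q1 hq_pos R2 Pa Pb hPa hPb h3
    show _ ≤ (R2 : EReal) + ((f1Fun q1 R2 1 (1/2) Pa Pb : ℝ) : EReal)
    rw [← EReal.coe_add]
    exact (min_le_left _ _).trans (half_min hkey hA1 hA2)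
  · rw [ereal_coe_add_iInf]
    refine le_iInf ?_
    rintro ⟨⟨Pa, Pb⟩, hPP⟩
    simp only [S2set, Set.mem_setOf_eq] at hPP
    obtain ⟨hPa, hPb, hm1, hm1', hm2, hm2', hR2le, h23⟩ := hPP
    have hmemA : Pa ∈ Pset Y1 Q1 Q2 := by
      simp only [Pset, Set.mem_setOf_eq]
      exact ⟨hPa, hm1, hm2⟩
    have hmemB : Pb ∈ Pset Y1 Q1 Q2 := by
      simp only [Pset, Set.mem_setOf_eq]
      exact ⟨hPb, hm1', hm2'⟩
    have hB1 : (⨅ P : Pset Y1 Q1 Q2,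
        ((Dq q1 P.1 + mutI P.1 (fun z => z.1) (fun z => z.2.1)
          + mutI P.1 (fun z => z.1) (fun z => (z.2.1, z.2.2)) : ℝ) : EReal))
        ≤ ((Dq q1 Pa + mutI Pa (fun z => z.1) (fun z => z.2.1)
          + mutI Pa (fun z => z.1) (fun z => (z.2.1, z.2.2)) : ℝ) : EReal) :=
      iInf_le _ (⟨Pa, hmemA⟩ : Pset Y1 Q1 Q2)
    have hB2 : (⨅ P : Pset Y1 Q1 Q2,
        ((Dq q1 P.1 + mutI P.1 (fun z => z.1) (fun z => z.2.1)
          + mutI P.1 (fun z => z.1) (fun z => (z.2.1, z.2.2)) : ℝ) : EReal))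
        ≤ ((Dq q1 Pb + mutI Pb (fun z => z.1) (fun z => z.2.1)
          + mutI Pb (fun z => z.1) (fun z => (z.2.1, z.2.2)) : ℝ) : EReal) :=
      iInf_le _ (⟨Pb, hmemB⟩ : Pset Y1 Q1 Q2)
    have h2 : pushf Pa (fun z => z.2.1) = pushf Pb (fun z => z.2.1) := hm2.trans hm2'.symm
    have hkey := key2 q1 hq_pos R2 Pa Pb hPa hPb h23 h2
    show _ ≤ (R2 : EReal) + ((f2Fun q1 R2 1 (1/2) Pa Pb : ℝ) : EReal)
    rw [← EReal.coe_add]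
    exact (min_le_right _ _).trans (half_min hkey hB1 hB2)
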